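/- Let f, g ∈ H² and for z ∈ 𝔻 let Ω_z(X) = X T_{φ_z} − T_{φ_{z̄}}* X for bounded operators X on H², where φ_z(w) = (w−z)/(1−z̄w). Then for the rank-one operator f ⊗ g, ‖Ω_z(f ⊗ g)‖ → 0 as |z| → 1. -/

import Mathlib

noncomputable section

set_option maxHeartbeats 1000000

open Filter

/- We model the Hardy space `H²` as an abstract complex Hilbert space `H` with Hilbert basis
`c : ℕ → H`; the unilateral shift `S` satisfies `S (c m) = c (m+1)`.  Since `φ_z ∈ H^∞`,
`T_{φ_z} = (S − z)(1 − z̄S)⁻¹`, and `Ω_z(X) = X T_{φ_z} − T_{φ_{z̄}}* X`. -/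

/-- The rank-one operator `x ⊗ y : h ↦ ⟨h, y⟩ x`. -/
noncomputable def rankOne {H : Type*} [NormedAddCommGroup H] [InnerProductSpace ℂ H]
    (x y : H) : H →L[ℂ] H :=
  (innerSL ℂ y).smulRight x

/-- The Toeplitz operator `T_{φ_z} = (S − z)(1 − z̄S)⁻¹` with symbol the Möbius map `φ_z`. -/
noncomputable def toeplitzMobius {H : Type*} [NormedAddCommGroup H] [InnerProductSpace ℂ H]
    (S : H →L[ℂ] H) (z : ℂ) : H →L[ℂ] H :=
  (S - z • (1 : H →L[ℂ] H)) * Ring.inverse (1 - (starRingEnd ℂ z) • S)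

namespace Stmt15

open ContinuousLinearMap Complex Set

variable {H : Type*} [NormedAddCommGroup H] [InnerProductSpace ℂ H] [CompleteSpace H]

local notation "⟪" x ", " y "⟫" => @inner ℂ _ _ x y

theorem hasSum_normsq (c : HilbertBasis ℕ ℂ H) (x : H) :
    HasSum (fun i => ‖⟪c i, x⟫‖ ^ 2) (‖x‖ ^ 2) := by
  have h := (c.hasSum_inner_mul_inner x x).mapL Complex.reCLM
  have h2 : Complex.reCLM ⟪x, x⟫ = ‖x‖ ^ 2 := by
    simpa using inner_self_eq_norm_sq (𝕜 := ℂ) x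
  rw [h2] at h
  refine h.congr_fun fun i => ?_
  rw [← inner_conj_symm x (c i), Complex.reCLM_apply, Complex.conj_mul',
    ← Complex.ofReal_pow, Complex.ofReal_re]

theorem ext_zero (c : HilbertBasis ℕ ℂ H) {x : H} (h : ∀ j, ⟪c j, x⟫ = 0) : x = 0 := by
  have h2 := hasSum_normsq c x
  simp only [h, norm_zero] at h2
  have h2' : HasSum (fun _ : ℕ => (0 : ℝ)) (‖x‖ ^ 2) := by
    refine h2.congr_fun fun i => ?_
    norm_num
  have h3 : ‖x‖ ^ 2 = 0 := h2'.unique hasSum_zero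
  have h4 : ‖x‖ = 0 := by nlinarith [norm_nonneg x]
  exact norm_eq_zero.mp h4

variable (c : HilbertBasis ℕ ℂ H) (S : H →L[ℂ] H)

theorem inner_adj (hS : ∀ m : ℕ, S (c m) = c (m + 1)) (j k : ℕ) :
    ⟪c j, ContinuousLinearMap.adjoint S (c k)⟫ = if j + 1 = k then 1 else 0 := by
  rw [ContinuousLinearMap.adjoint_inner_right, hS]
  exact orthonormal_iff_ite.mp c.orthonormal _ _

theorem adjS_zero (hS : ∀ m : ℕ, S (c m) = c (m + 1)) :
    ContinuousLinearMap.adjoint S (c 0) = 0 :=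
  ext_zero c fun j => by rw [inner_adj c S hS]; simp

theorem adjS_succ (hS : ∀ m : ℕ, S (c m) = c (m + 1)) (k : ℕ) :
    ContinuousLinearMap.adjoint S (c (k + 1)) = c k := by
  have h : ∀ j, ⟪c j, ContinuousLinearMap.adjoint S (c (k + 1)) - c k⟫ = 0 := by
    intro j
    rw [inner_sub_right, inner_adj c S hS, orthonormal_iff_ite.mp c.orthonormal j k]
    by_cases hjk : j = k <;> simp [hjk]
  exact sub_eq_zero.mp (ext_zero c h)

theorem norm_adjS_le (hS : ∀ m : ℕ, S (c m) = c (m + 1)) :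
    ‖ContinuousLinearMap.adjoint S‖ ≤ 1 := by
  refine ContinuousLinearMap.opNorm_le_bound _ zero_le_one fun x => ?_
  rw [one_mul]
  have hx := hasSum_normsq c x
  have hAx : HasSum (fun j : ℕ => ‖⟪c (j + 1), x⟫‖ ^ 2)
      (‖ContinuousLinearMap.adjoint S x‖ ^ 2) := by
    refine (hasSum_normsq c (ContinuousLinearMap.adjoint S x)).congr_fun fun j => ?_
    rw [ContinuousLinearMap.adjoint_inner_right, hS]
  have hle : ‖ContinuousLinearMap.adjoint S x‖ ^ 2 ≤ ‖x‖ ^ 2 := by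
    refine hasSum_le_inj (fun j => j + 1) (fun a b hab => by simpa using hab) ?_ ?_ hAx hx
    · intro m _
      positivity
    · intro i
      exact le_rfl
  nlinarith [norm_nonneg (ContinuousLinearMap.adjoint S x), norm_nonneg x]

theorem norm_S_le (hS : ∀ m : ℕ, S (c m) = c (m + 1)) : ‖S‖ ≤ 1 := by
  have h : ‖ContinuousLinearMap.adjoint (ContinuousLinearMap.adjoint S)‖
      = ‖ContinuousLinearMap.adjoint S‖ :=
    (ContinuousLinearMap.adjoint : (H →L[ℂ] H) ≃ₗᵢ⋆[ℂ] (H →L[ℂ] H)).norm_map _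
  rw [ContinuousLinearMap.adjoint_adjoint] at h
  rw [h]; exact norm_adjS_le c S hS

theorem pow_norm_le {A : H →L[ℂ] H} (hA : ‖A‖ ≤ 1) (n : ℕ) : ‖A ^ n‖ ≤ 1 := by
  induction n with
  | zero => simpa [ContinuousLinearMap.one_def] using ContinuousLinearMap.norm_id_le
  | succ n ih =>
      rw [pow_succ]
      calc ‖A ^ n * A‖ ≤ ‖A ^ n‖ * ‖A‖ := norm_mul_le _ _
        _ ≤ 1 * 1 := mul_le_mul ih hA (norm_nonneg _) zero_le_one
        _ = 1 := one_mul 1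

theorem pow_adj_basis (hS : ∀ m : ℕ, S (c m) = c (m + 1)) (m k : ℕ) :
    ((ContinuousLinearMap.adjoint S) ^ m) (c k) = if m ≤ k then c (k - m) else 0 := by
  induction m generalizing k with
  | zero => simp
  | succ m ih =>
      rw [pow_succ, ContinuousLinearMap.mul_apply]
      cases k with
      | zero => rw [adjS_zero c S hS, map_zero, if_neg (by omega)]
      | succ j =>
          rw [adjS_succ c S hS, ih j]
          by_cases h : m ≤ j
          · rw [if_pos h, if_pos (by omega), Nat.succ_sub_succ]
          · rw [if_neg h, if_neg (by omega)]

theorem span_vanish (hS : ∀ m : ℕ, S (c m) = c (m + 1)) {p : H}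
    (hp : p ∈ Submodule.span ℂ (Set.range c)) :
    ∃ M : ℕ, ∀ m, M ≤ m → ((ContinuousLinearMap.adjoint S) ^ m) p = 0 := by
  induction hp using Submodule.span_induction with
  | mem x hx =>
      obtain ⟨k, rfl⟩ := hx
      exact ⟨k + 1, fun m hm => by rw [pow_adj_basis c S hS, if_neg (by omega)]⟩
  | zero => exact ⟨0, fun m _ => map_zero _⟩
  | add x y hx hy ihx ihy =>
      obtain ⟨M, hM⟩ := ihx
      obtain ⟨N, hN⟩ := ihy
      exact ⟨max M N, fun m hm => by
        rw [map_add, hM m (le_trans (le_max_left _ _) hm),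
          hN m (le_trans (le_max_right _ _) hm), add_zero]⟩
  | smul a x hx ihx =>
      obtain ⟨M, hM⟩ := ihx
      exact ⟨M, fun m hm => by rw [map_smul, hM m hm, smul_zero]⟩

theorem tail_small (hS : ∀ m : ℕ, S (c m) = c (m + 1)) (v : H) {ε : ℝ} (hε : 0 < ε) :
    ∃ M : ℕ, ∀ m, M ≤ m → ‖((ContinuousLinearMap.adjoint S) ^ m) v‖ < ε := by
  have hd : Dense (Submodule.span ℂ (Set.range c) : Set H) := by
    have h := c.dense_span
    rw [Submodule.dense_iff_topologicalClosure_eq_top] at *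
    exact h
  obtain ⟨p, hp, hdist⟩ := hd.exists_dist_lt v (half_pos hε)
  obtain ⟨M, hM⟩ := span_vanish c S hS hp
  refine ⟨M, fun m hm => ?_⟩
  have hsplit : ((ContinuousLinearMap.adjoint S) ^ m) v
      = ((ContinuousLinearMap.adjoint S) ^ m) (v - p)
        + ((ContinuousLinearMap.adjoint S) ^ m) p := by
    rw [← map_add, sub_add_cancel]
  rw [hsplit, hM m hm, add_zero]
  calc ‖((ContinuousLinearMap.adjoint S) ^ m) (v - p)‖
      ≤ ‖(ContinuousLinearMap.adjoint S) ^ m‖ * ‖v - p‖ := ContinuousLinearMap.le_opNorm _ _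
    _ ≤ 1 * ‖v - p‖ := by
        have := pow_norm_le (norm_adjS_le c S hS) m
        exact mul_le_mul_of_nonneg_right this (norm_nonneg _)
    _ = dist v p := by rw [one_mul, dist_eq_norm]
    _ < ε := lt_of_lt_of_le hdist (by linarith)

theorem key_est (hS : ∀ m : ℕ, S (c m) = c (m + 1)) {z : ℂ} (hz : ‖z‖ < 1)
    (v : H) (M : ℕ) :
    ‖z • v + ContinuousLinearMap.adjoint (toeplitzMobius S (starRingEnd ℂ z)) v‖ ≤
      (1 - ‖z‖ ^ 2) * (M * ‖v‖)
        + 2 * ‖((ContinuousLinearMap.adjoint S) ^ M) (ContinuousLinearMap.adjoint S v)‖ := by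
  set A : H →L[ℂ] H := ContinuousLinearMap.adjoint S with hA
  have hAnorm : ‖A‖ ≤ 1 := norm_adjS_le c S hS
  set x : H →L[ℂ] H := (starRingEnd ℂ z) • A with hxdef
  have habs : 0 ≤ ‖z‖ := norm_nonneg z
  have hxnorm : ‖x‖ ≤ ‖z‖ := by
    rw [hxdef, norm_smul]
    calc ‖(starRingEnd ℂ) z‖ * ‖A‖ ≤ ‖(starRingEnd ℂ) z‖ * 1 :=
          mul_le_mul_of_nonneg_left hAnorm (norm_nonneg _)
      _ = ‖z‖ := by rw [mul_one, Complex.norm_conj]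
  have hxlt : ‖x‖ < 1 := lt_of_le_of_lt hxnorm hz
  have hu : IsUnit ((1 : H →L[ℂ] H) - x) := isUnit_one_sub_of_norm_lt_one hxlt
  set Binv : H →L[ℂ] H := Ring.inverse (1 - x) with hBdef
  have h1 : (1 - x) * Binv = 1 := Ring.mul_inverse_cancel _ hu
  have h2 : Binv * (1 - x) = 1 := Ring.inverse_mul_cancel _ hu
  -- adjoint of the Toeplitz operator
  have hadj : ContinuousLinearMap.adjoint (toeplitzMobius S (starRingEnd ℂ z))
      = Binv * (A - z • (1 : H →L[ℂ] H)) := by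
    rw [← ContinuousLinearMap.star_eq_adjoint, toeplitzMobius, star_mul, ← Ring.inverse_star]
    congr 1
    · rw [Complex.conj_conj, star_sub, star_one, star_smul, RCLike.star_def,
        ContinuousLinearMap.star_eq_adjoint]
    · rw [star_sub, star_smul, star_one, RCLike.star_def, Complex.conj_conj,
        ContinuousLinearMap.star_eq_adjoint]
  -- the key identity
  have hBv : ∀ y : H, Binv ((1 - x) y) = y := by
    intro y
    have h := congrArg (fun T : H →L[ℂ] H => T y) h2
    simpa [ContinuousLinearMap.mul_apply] using h
  have hid : z • v + ContinuousLinearMap.adjoint (toeplitzMobius S (starRingEnd ℂ z)) v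
      = ((1 : ℂ) - z * (starRingEnd ℂ) z) • Binv (A v) := by
    rw [hadj]
    calc z • v + (Binv * (A - z • (1 : H →L[ℂ] H))) v
        = Binv ((1 - x) (z • v)) + Binv ((A - z • (1 : H →L[ℂ] H)) v) := by
          rw [hBv, ContinuousLinearMap.mul_apply]
      _ = Binv ((1 - x) (z • v) + (A - z • (1 : H →L[ℂ] H)) v) := (map_add _ _ _).symm
      _ = Binv (((1 : ℂ) - z * (starRingEnd ℂ) z) • A v) := by
          congr 1
          simp only [ContinuousLinearMap.sub_apply, ContinuousLinearMap.smul_apply,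
            ContinuousLinearMap.one_apply, hxdef, map_smul, sub_smul, one_smul, smul_smul]
          module
      _ = ((1 : ℂ) - z * (starRingEnd ℂ) z) • Binv (A v) := map_smul _ _ _
  have hscal : ((1 : ℂ) - z * (starRingEnd ℂ) z) = ((1 - ‖z‖ ^ 2 : ℝ) : ℂ) := by
    rw [Complex.mul_conj, ← Complex.sq_norm]
    push_cast
    ring
  have hnorm_eq : ‖z • v + ContinuousLinearMap.adjoint (toeplitzMobius S (starRingEnd ℂ z)) v‖
      = (1 - ‖z‖ ^ 2) * ‖Binv (A v)‖ := by
    rw [hid, hscal, norm_smul, Complex.norm_real, Real.norm_eq_abs,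
      _root_.abs_of_nonneg (by nlinarith)]
  -- geometric splitting
  have hg : ((1 : H →L[ℂ] H) - x) * (∑ i ∈ Finset.range M, x ^ i) = 1 - x ^ M := by
    have h := mul_geom_sum x M
    rw [← neg_sub x (1 : H →L[ℂ] H), neg_mul, h, neg_sub]
  have hgeom : Binv = (∑ i ∈ Finset.range M, x ^ i) + Binv * x ^ M := by
    calc Binv = Binv * 1 := (mul_one _).symm
      _ = Binv * (((1 : H →L[ℂ] H) - x) * (∑ i ∈ Finset.range M, x ^ i) + x ^ M) := by
          rw [hg, sub_add_cancel]
      _ = (Binv * ((1 : H →L[ℂ] H) - x)) * (∑ i ∈ Finset.range M, x ^ i) + Binv * x ^ M := by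
          rw [mul_add, mul_assoc]
      _ = (∑ i ∈ Finset.range M, x ^ i) + Binv * x ^ M := by rw [h2, one_mul]
  have hsplit : Binv (A v) = (∑ i ∈ Finset.range M, x ^ i) (A v) + Binv ((x ^ M) (A v)) := by
    conv_lhs => rw [hgeom]
    rw [ContinuousLinearMap.add_apply, ContinuousLinearMap.mul_apply]
  -- estimate the finite geometric sum
  have hAv : ‖A v‖ ≤ ‖v‖ := by
    calc ‖A v‖ ≤ ‖A‖ * ‖v‖ := ContinuousLinearMap.le_opNorm _ _
      _ ≤ 1 * ‖v‖ := mul_le_mul_of_nonneg_right hAnorm (norm_nonneg _)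
      _ = ‖v‖ := one_mul _
  have hsum : ‖(∑ i ∈ Finset.range M, x ^ i) (A v)‖ ≤ M * ‖v‖ := by
    rw [ContinuousLinearMap.sum_apply]
    calc ‖∑ i ∈ Finset.range M, (x ^ i) (A v)‖ ≤ ∑ i ∈ Finset.range M, ‖(x ^ i) (A v)‖ :=
          norm_sum_le _ _
      _ ≤ ∑ _i ∈ Finset.range M, ‖v‖ := by
          refine Finset.sum_le_sum fun i _ => ?_
          calc ‖(x ^ i) (A v)‖ ≤ ‖x ^ i‖ * ‖A v‖ := ContinuousLinearMap.le_opNorm _ _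
            _ ≤ 1 * ‖v‖ :=
              mul_le_mul (pow_norm_le (le_trans hxnorm hz.le) i) hAv (norm_nonneg _) zero_le_one
            _ = ‖v‖ := one_mul _
      _ = M * ‖v‖ := by rw [Finset.sum_const, Finset.card_range, nsmul_eq_mul]
  -- estimate the tail
  have htail : ‖Binv ((x ^ M) (A v))‖ ≤ ‖Binv‖ * ‖(A ^ M) (A v)‖ := by
    calc ‖Binv ((x ^ M) (A v))‖ ≤ ‖Binv‖ * ‖(x ^ M) (A v)‖ := ContinuousLinearMap.le_opNorm _ _
      _ ≤ ‖Binv‖ * ‖(A ^ M) (A v)‖ := by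
          refine mul_le_mul_of_nonneg_left ?_ (norm_nonneg _)
          have hxM : x ^ M = ((starRingEnd ℂ) z) ^ M • A ^ M := by rw [hxdef, smul_pow]
          rw [hxM, ContinuousLinearMap.smul_apply, norm_smul]
          calc ‖((starRingEnd ℂ) z) ^ M‖ * ‖(A ^ M) (A v)‖
              ≤ 1 * ‖(A ^ M) (A v)‖ := by
                refine mul_le_mul_of_nonneg_right ?_ (norm_nonneg _)
                rw [norm_pow, Complex.norm_conj]
                exact pow_le_one₀ habs hz.le
            _ = ‖(A ^ M) (A v)‖ := one_mul _
  -- bound on ‖Binv‖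
  have hBid : Binv = 1 + x * Binv := by
    have h' : Binv - x * Binv = 1 := by
      rw [← h1, sub_mul, one_mul]
    rw [sub_eq_iff_eq_add] at h'
    exact h'
  have hBnorm1 : ‖Binv‖ ≤ 1 + ‖z‖ * ‖Binv‖ := by
    calc ‖Binv‖ = ‖(1 : H →L[ℂ] H) + x * Binv‖ := by rw [← hBid]
      _ ≤ ‖(1 : H →L[ℂ] H)‖ + ‖x * Binv‖ := norm_add_le _ _
      _ ≤ 1 + ‖x‖ * ‖Binv‖ := by
          have := norm_mul_le x Binv
          have hone : ‖(1 : H →L[ℂ] H)‖ ≤ 1 := by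
            simpa [ContinuousLinearMap.one_def] using ContinuousLinearMap.norm_id_le
          linarith
      _ ≤ 1 + ‖z‖ * ‖Binv‖ := by
          have := mul_le_mul_of_nonneg_right hxnorm (norm_nonneg Binv)
          linarith
  have hBnorm : (1 - ‖z‖) * ‖Binv‖ ≤ 1 := by nlinarith [norm_nonneg Binv]
  -- combine
  have hBfac : (1 - ‖z‖ ^ 2) * ‖Binv‖ ≤ 2 := by nlinarith [norm_nonneg Binv]
  have hfinal : ‖Binv (A v)‖ ≤ M * ‖v‖ + ‖Binv‖ * ‖(A ^ M) (A v)‖ := by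
    rw [hsplit]
    calc ‖(∑ i ∈ Finset.range M, x ^ i) (A v) + Binv ((x ^ M) (A v))‖
        ≤ ‖(∑ i ∈ Finset.range M, x ^ i) (A v)‖ + ‖Binv ((x ^ M) (A v))‖ := norm_add_le _ _
      _ ≤ M * ‖v‖ + ‖Binv‖ * ‖(A ^ M) (A v)‖ := add_le_add hsum htail
  rw [hnorm_eq]
  have hpos : (0 : ℝ) ≤ 1 - ‖z‖ ^ 2 := by nlinarith
  calc (1 - ‖z‖ ^ 2) * ‖Binv (A v)‖
      ≤ (1 - ‖z‖ ^ 2) * (M * ‖v‖ + ‖Binv‖ * ‖(A ^ M) (A v)‖) :=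
        mul_le_mul_of_nonneg_left hfinal hpos
    _ ≤ (1 - ‖z‖ ^ 2) * (M * ‖v‖) + 2 * ‖(A ^ M) (A v)‖ := by
        nlinarith [norm_nonneg ((A ^ M) (A v)), norm_nonneg Binv,
          mul_le_mul_of_nonneg_right hBfac (norm_nonneg ((A ^ M) (A v)))]

theorem key_tendsto (hS : ∀ m : ℕ, S (c m) = c (m + 1)) (v : H) :
    Tendsto (fun z : ℂ => ‖z • v + ContinuousLinearMap.adjoint
        (toeplitzMobius S (starRingEnd ℂ z)) v‖)
      (comap (fun z : ℂ => ‖z‖) (nhdsWithin 1 (Set.Iio 1))) (nhds 0) := by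
  rw [NormedAddCommGroup.tendsto_nhds_zero]
  intro ε hε
  obtain ⟨M, hM⟩ := tail_small c S hS (ContinuousLinearMap.adjoint S v) (by positivity :
    (0 : ℝ) < ε / 8)
  set δ : ℝ := ε / (4 * (M * ‖v‖ + 1)) with hδdef
  have hδpos : 0 < δ := by positivity
  have hmem : Set.Ioo (1 - δ) 1 ∈ nhdsWithin (1 : ℝ) (Set.Iio 1) :=
    Ioo_mem_nhdsLT_of_mem ⟨by linarith, le_refl 1⟩
  filter_upwards [preimage_mem_comap hmem] with z hz
  obtain ⟨hz1, hz2⟩ := hz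
  have hest := key_est c S hS hz2 v M
  have htail := hM M le_rfl
  rw [Real.norm_eq_abs, _root_.abs_of_nonneg (norm_nonneg _)]
  have habs : 0 ≤ ‖z‖ := norm_nonneg z
  have hδK : δ * (M * ‖v‖ + 1) = ε / 4 := by
    rw [hδdef]
    field_simp
  have hK : (0 : ℝ) ≤ M * ‖v‖ := by positivity
  calc ‖z • v + ContinuousLinearMap.adjoint (toeplitzMobius S (starRingEnd ℂ z)) v‖
      ≤ (1 - ‖z‖ ^ 2) * (M * ‖v‖)
        + 2 * ‖((ContinuousLinearMap.adjoint S) ^ M) (ContinuousLinearMap.adjoint S v)‖ := hest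
    _ < ε := by
        have h1a : 1 - ‖z‖ ^ 2 ≤ 2 * δ := by
          nlinarith [sq_nonneg (1 - ‖z‖)]
        have h2a : (1 - ‖z‖ ^ 2) * (M * ‖v‖) ≤ 2 * δ * (M * ‖v‖) :=
          mul_le_mul_of_nonneg_right h1a hK
        have h3a : 2 * δ * (M * ‖v‖) ≤ ε / 2 := by nlinarith [hδK, hδpos, hK]
        linarith [h2a, h3a, htail]

theorem rankOne_norm_le (x y : H) : ‖rankOne x y‖ ≤ ‖x‖ * ‖y‖ := by
  refine ContinuousLinearMap.opNorm_le_bound _ (by positivity) fun h => ?_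
  rw [rankOne]
  simp only [ContinuousLinearMap.smulRight_apply, innerSL_apply_apply]
  rw [norm_smul]
  calc ‖⟪y, h⟫‖ * ‖x‖ ≤ ‖y‖ * ‖h‖ * ‖x‖ :=
        mul_le_mul_of_nonneg_right (norm_inner_le_norm _ _) (norm_nonneg _)
    _ = ‖x‖ * ‖y‖ * ‖h‖ := by ring

end Stmt15

open Stmt15 in
/-- for `f, g ∈ H²`, `‖Ω_z(f ⊗ g)‖ → 0` as `|z| → 1`, where
`Ω_z(X) = X T_{φ_z} − T_{φ_{z̄}}* X`. -/
theorem stmt15 {H : Type*} [NormedAddCommGroup H] [InnerProductSpace ℂ H] [CompleteSpace H]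
    (c : HilbertBasis ℕ ℂ H) (S : H →L[ℂ] H)
    (hS : ∀ m : ℕ, S (c m) = c (m + 1)) (f g : H) :
    Tendsto
      (fun z : ℂ =>
        ‖rankOne f g ∘L toeplitzMobius S z -
            ContinuousLinearMap.adjoint (toeplitzMobius S (starRingEnd ℂ z)) ∘L rankOne f g‖)
      (comap (fun z : ℂ => ‖z‖) (nhdsWithin 1 (Set.Iio 1))) (nhds 0) := by
  classical
  set L := comap (fun z : ℂ => ‖z‖) (nhdsWithin (1 : ℝ) (Set.Iio 1)) with hL
  -- decomposition of the commutator-like operator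
  have hcomp : ∀ z : ℂ,
      rankOne f g ∘L toeplitzMobius S z -
          ContinuousLinearMap.adjoint (toeplitzMobius S (starRingEnd ℂ z)) ∘L rankOne f g
        = rankOne f ((starRingEnd ℂ z) • g + ContinuousLinearMap.adjoint (toeplitzMobius S z) g)
          - rankOne (z • f
              + ContinuousLinearMap.adjoint (toeplitzMobius S (starRingEnd ℂ z)) f) g := by
    intro z
    ext h
    simp only [ContinuousLinearMap.sub_apply, ContinuousLinearMap.coe_comp', Function.comp_apply,
      rankOne, ContinuousLinearMap.smulRight_apply, innerSL_apply_apply, inner_add_left,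
      inner_smul_left, ContinuousLinearMap.adjoint_inner_left, map_smul, RingHom.id_apply,
      Complex.conj_conj, add_smul, smul_smul]
    module
  -- norm bound
  have hbound : ∀ z : ℂ,
      ‖rankOne f g ∘L toeplitzMobius S z -
          ContinuousLinearMap.adjoint (toeplitzMobius S (starRingEnd ℂ z)) ∘L rankOne f g‖
        ≤ ‖f‖ * ‖(starRingEnd ℂ z) • g + ContinuousLinearMap.adjoint (toeplitzMobius S z) g‖
          + ‖z • f
              + ContinuousLinearMap.adjoint (toeplitzMobius S (starRingEnd ℂ z)) f‖ * ‖g‖ := by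
    intro z
    rw [hcomp z]
    refine le_trans (norm_sub_le _ _) (add_le_add ?_ ?_)
    · exact rankOne_norm_le _ _
    · exact rankOne_norm_le _ _
  -- conjugation preserves the filter
  have hconj : Tendsto (fun z : ℂ => (starRingEnd ℂ) z) L L := by
    rw [hL, tendsto_comap_iff]
    have heq : ((fun z : ℂ => ‖z‖) ∘ fun z : ℂ => (starRingEnd ℂ) z) = (fun z : ℂ => ‖z‖) :=
      funext fun z => Complex.norm_conj z
    rw [heq]
    exact tendsto_comap
  have hkf : Tendsto (fun z : ℂ => ‖z • f + ContinuousLinearMap.adjoint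
      (toeplitzMobius S (starRingEnd ℂ z)) f‖) L (nhds 0) := key_tendsto c S hS f
  have hkg0 : Tendsto (fun z : ℂ => ‖z • g + ContinuousLinearMap.adjoint
      (toeplitzMobius S (starRingEnd ℂ z)) g‖) L (nhds 0) := key_tendsto c S hS g
  have hkg : Tendsto (fun z : ℂ => ‖(starRingEnd ℂ z) • g + ContinuousLinearMap.adjoint
      (toeplitzMobius S z) g‖) L (nhds 0) := by
    have h := hkg0.comp hconj
    have heq : ((fun z : ℂ => ‖z • g + ContinuousLinearMap.adjoint
        (toeplitzMobius S (starRingEnd ℂ z)) g‖) ∘ fun z : ℂ => (starRingEnd ℂ) z)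
        = fun z : ℂ => ‖(starRingEnd ℂ z) • g + ContinuousLinearMap.adjoint
          (toeplitzMobius S z) g‖ := by
      funext z
      simp [Function.comp, Complex.conj_conj]
    rwa [heq] at h
  -- squeeze
  have hsum : Tendsto (fun z : ℂ =>
      ‖f‖ * ‖(starRingEnd ℂ z) • g + ContinuousLinearMap.adjoint (toeplitzMobius S z) g‖
        + ‖z • f
            + ContinuousLinearMap.adjoint (toeplitzMobius S (starRingEnd ℂ z)) f‖ * ‖g‖)
      L (nhds 0) := by
    have h := (hkg.const_mul ‖f‖).add (hkf.mul_const ‖g‖)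
    simpa using h
  exact squeeze_zero (fun z => norm_nonneg _) hbound hsum
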